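/- Let n ≥ 1, A = ℤ[x]/(x^{n+1}), and let t : A × A → A be the ℤ-bilinear map determined on the basis by t(x^i, x^j) = x^{i+j−(n+1)} if i + j ≥ n+1 and t(x^i, x^j) = 0 if i + j ≤ n. Then t is not a Hochschild 2-coboundary: there is no ℤ-linear map g : A → A such that t(a,b) = a·g(b) − g(ab) + g(a)·b for all a, b ∈ A. In particular, no ℤ-linear g : A → A satisfies 2·x^n·g(x^n) = x^{n−1}. -/
import Mathlib


open Polynomial

noncomputable section

/-- `A = ℤ[x]/(x^{n+1})`, the truncated polynomial ring. -/
abbrev A (n : ℕ) : Type := AdjoinRoot ((X : ℤ[X]) ^ (n + 1))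

/-- The class of `X` in `A`, i.e. the element `x`. -/
abbrev xA (n : ℕ) : A n := AdjoinRoot.root _

lemma xA_pow_succ_eq_zero (n : ℕ) : (xA n) ^ (n + 1) = 0 := by
  have := AdjoinRoot.isRoot_root ((X : ℤ[X]) ^ (n + 1))
  simpa [Polynomial.IsRoot, AdjoinRoot.eval₂_root] using this

lemma xA_pow_ne_zero (n k : ℕ) (hk : k ≤ n) : (xA n) ^ k ≠ 0 := by
  intro h
  have hmk : (AdjoinRoot.mk ((X : ℤ[X]) ^ (n + 1))) ((X : ℤ[X]) ^ k) = 0 := by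
    simpa [map_pow, AdjoinRoot.mk_X] using h
  rw [AdjoinRoot.mk_eq_zero] at hmk
  have hdeg := Polynomial.natDegree_le_of_dvd hmk (pow_ne_zero _ Polynomial.X_ne_zero)
  simp [Polynomial.natDegree_X_pow] at hdeg
  omega

lemma key (n : ℕ) (hn : 1 ≤ n) :
    ∀ g : A n →ₗ[ℤ] A n, 2 * (xA n) ^ n * g ((xA n) ^ n) ≠ (xA n) ^ (n - 1) := by
  intro g h
  have h2 : xA n * (2 * (xA n) ^ n * g ((xA n) ^ n)) = xA n * (xA n) ^ (n - 1) := by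
    rw [h]
  have hz : xA n * (xA n) ^ (n - 1) = (xA n) ^ n := by
    rw [← pow_succ']
    congr 1
    omega
  have hl : xA n * (2 * (xA n) ^ n * g ((xA n) ^ n)) = 0 := by
    have : xA n * (2 * (xA n) ^ n * g ((xA n) ^ n)) =
        2 * (xA n) ^ (n + 1) * g ((xA n) ^ n) := by ring
    rw [this, xA_pow_succ_eq_zero]; ring
  rw [hl, hz] at h2
  exact xA_pow_ne_zero n n le_rfl h2.symm

/-- the `ℤ`-bilinear map `t : A × A → A` determined on the basis by
`t(xⁱ, xʲ) = x^{i+j−(n+1)}` if `i + j ≥ n+1` and `t(xⁱ, xʲ) = 0` if `i + j ≤ n` is not a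
Hochschild 2-coboundary: there is no `ℤ`-linear `g : A → A` with
`t(a,b) = a·g(b) − g(ab) + g(a)·b` for all `a, b`. In particular no `ℤ`-linear
`g : A → A` satisfies `2·xⁿ·g(xⁿ) = x^{n−1}`. -/
theorem stmt15 (n : ℕ) (hn : 1 ≤ n)
    (t : A n →ₗ[ℤ] A n →ₗ[ℤ] A n)
    (ht : ∀ i j : ℕ, i ≤ n → j ≤ n →
      t ((xA n) ^ i) ((xA n) ^ j) =
        if n + 1 ≤ i + j then (xA n) ^ (i + j - (n + 1)) else 0) :
    (¬ ∃ g : A n →ₗ[ℤ] A n,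
        ∀ a b : A n, t a b = a * g b - g (a * b) + g a * b) ∧
    ∀ g : A n →ₗ[ℤ] A n, 2 * (xA n) ^ n * g ((xA n) ^ n) ≠ (xA n) ^ (n - 1) := by
  refine ⟨?_, key n hn⟩
  rintro ⟨g, hg⟩
  have htnn := ht n n le_rfl le_rfl
  rw [if_pos (by omega)] at htnn
  have hnn : n + n - (n + 1) = n - 1 := by omega
  rw [hnn] at htnn
  have h2n : (xA n) ^ n * (xA n) ^ n = 0 := by
    rw [← pow_add]
    have : n + n = (n + 1) + (n - 1) := by omega
    rw [this, pow_add, xA_pow_succ_eq_zero, zero_mul]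
  have := hg ((xA n) ^ n) ((xA n) ^ n)
  rw [htnn, h2n, map_zero] at this
  apply key n hn g
  rw [this]; ring

end
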